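/- Let R be a strongly J-*-clean ring. Then R is abelian, i.e., every idempotent of R is central. -/
import Mathlib


/-- A *-ring `R` is strongly J-*-clean if every element is the sum of a projection
and an element of the Jacobson radical that commute. -/
def StronglyJStarClean (R : Type*) [Ring R] [StarRing R] : Prop :=
  ∀ a : R, ∃ e u : R, e * e = e ∧ star e = e ∧
    u ∈ Ideal.jacobson (⊥ : Ideal R) ∧ a = e + u ∧ a * e = e * a

/-- Auxiliary: in a strongly J-*-clean ring, every idempotent is a projection. -/
lemma star_of_idem {R : Type*} [Ring R] [StarRing R] (h : StronglyJStarClean R)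
    (e : R) (he : e * e = e) : star e = e := by
  obtain ⟨f, u, hf, hfs, hu, heq, hcomm⟩ := h e
  have hfe : f * e = e * f := hcomm.symm
  have hw : e - f ∈ Ideal.jacobson (⊥ : Ideal R) := by
    have huef : e - f = u := by rw [heq]; abel
    rwa [huef]
  have h1 : e * f * e = e * f := by rw [mul_assoc, hfe, ← mul_assoc, he]
  have h3 : e * f * f = e * f := by rw [mul_assoc, hf]
  have hw3 : (e - f) * (e - f) * (e - f) = e - f := by
    have expand : (e - f) * (e - f) * (e - f)
        = e * e * e - e * e * f - e * f * e + e * f * f - f * e * e + f * e * f + f * f * e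
          - f * f * f := by noncomm_ring
    rw [expand]
    simp only [he, hf, hfe, h1, h3]
    abel
  obtain ⟨z, hz⟩ := Ideal.mem_jacobson_iff.1 hw (-(e - f))
  rw [Ideal.mem_bot] at hz
  have h1' : z * -(e - f) * (e - f) + z = 1 := sub_eq_zero.1 hz
  have hef0 : e - f = 0 := by
    calc e - f = 1 * (e - f) := (one_mul _).symm
      _ = (z * -(e - f) * (e - f) + z) * (e - f) := by rw [h1']
      _ = z * (e - f) - z * ((e - f) * (e - f) * (e - f)) := by noncomm_ring
      _ = 0 := by rw [hw3, sub_self]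
  have hef : e = f := sub_eq_zero.1 hef0
  rw [hef, hfs]

/-- Auxiliary: in a strongly J-*-clean ring, `(1-e) x e = 0` for every idempotent `e`. -/
lemma corner_zero {R : Type*} [Ring R] [StarRing R] (h : StronglyJStarClean R)
    (e : R) (he : e * e = e) (x : R) : (1 - e) * x * e = 0 := by
  have hse : star e = e := star_of_idem h e he
  have he1 : e * (1 - e) = 0 := by rw [mul_sub, mul_one, he, sub_self]
  have hg : (e + (1 - e) * x * e) * (e + (1 - e) * x * e) = e + (1 - e) * x * e := by
    have expand : (e + (1 - e) * x * e) * (e + (1 - e) * x * e)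
        = e * e + (e * (1 - e)) * (x * e) + (1 - e) * x * (e * e)
          + ((1 - e) * x) * ((e * (1 - e)) * (x * e)) := by noncomm_ring
    rw [expand, he, he1]
    noncomm_ring
  have hgs : star (e + (1 - e) * x * e) = e + (1 - e) * x * e := star_of_idem h _ hg
  have hstar : e * star x * (1 - e) = (1 - e) * x * e := by
    calc e * star x * (1 - e) = star ((1 - e) * x * e) := by
          rw [star_mul, star_mul, star_sub, star_one, hse, mul_assoc]
      _ = star (e + (1 - e) * x * e) - e := by rw [star_add, hse]; abel
      _ = (1 - e) * x * e := by rw [hgs]; abel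
  have hmul : e * (e * star x * (1 - e)) = e * ((1 - e) * x * e) := by rw [hstar]
  have hL : e * (e * star x * (1 - e)) = e * star x * (1 - e) := by
    rw [← mul_assoc, ← mul_assoc, he]
  have hR : e * ((1 - e) * x * e) = 0 := by
    rw [← mul_assoc, ← mul_assoc, he1, zero_mul, zero_mul]
  rw [hL, hR] at hmul
  rw [← hstar, hmul]

theorem stmt_1 (R : Type*) [Ring R] [StarRing R] (h : StronglyJStarClean R) :
    ∀ e : R, e * e = e → ∀ x : R, e * x = x * e := by
  intro e he x
  have A := corner_zero h e he x
  have he' : (1 - e) * (1 - e) = 1 - e := by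
    have : (1 - e) * (1 - e) = 1 - e - (e - e * e) := by noncomm_ring
    rw [this, he, sub_self, sub_zero]
  have B := corner_zero h (1 - e) he' x
  have hB' : e * x * (1 - e) = 0 := by
    have : (1 - (1 - e)) * x * (1 - e) = e * x * (1 - e) := by noncomm_ring
    rwa [this] at B
  have hA : x * e = e * x * e := by
    have hx : (1 - e) * x * e = x * e - e * x * e := by noncomm_ring
    rw [hx] at A
    exact sub_eq_zero.1 A
  have hB : e * x = e * x * e := by
    have hx : e * x * (1 - e) = e * x - e * x * e := by noncomm_ring
    rw [hx] at hB'
    exact sub_eq_zero.1 hB'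
  rw [hB, ← hA]
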